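/- The stack-aware transformation is multiplicative on well-matched words: if u and v are well-matched, then T(u · v) = T(u) · T(v). -/
import Mathlib


inductive Kind : Type
  | call | ret | internal
deriving DecidableEq

def callCount {α : Type} (k : α → Kind) (w : List α) : ℕ :=
  w.countP (fun a => decide (k a = Kind.call))

def retCount {α : Type} (k : α → Kind) (w : List α) : ℕ :=
  w.countP (fun a => decide (k a = Kind.ret))

/-- A word is well-matched if every prefix has at least as many call symbols as
return symbols, and the total numbers of call and return symbols are equal. -/
def WellMatched {α : Type} (k : α → Kind) (w : List α) : Prop :=
  (∀ p, p <+: w → retCount k p ≤ callCount k p) ∧ callCount k w = retCount k w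

/-- The stack-aware transformation, carrying the stack of unmatched call symbols. -/
def Tgo {α : Type} (k : α → Kind) : List α → List α → List (α ⊕ α × α)
  | _, [] => []
  | st, a :: rest =>
    match k a with
    | Kind.call => Sum.inl a :: Tgo k (a :: st) rest
    | Kind.internal => Sum.inl a :: Tgo k st rest
    | Kind.ret =>
      match st with
      | [] => Sum.inl a :: Tgo k [] rest
      | c :: s => Sum.inr (a, c) :: Tgo k s rest

/-- The stack-aware transformation: each return symbol `r` is replaced by the pair
`(r, c)` where `c` is its matching call symbol; other symbols are kept. -/
def T {α : Type} (k : α → Kind) (w : List α) : List (α ⊕ α × α) :=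
  Tgo k [] w

/-- The stack of unmatched call symbols (head = top) after processing `w`. -/
def stackAfter {α : Type} (k : α → Kind) (w : List α) : List α :=
  w.foldl
    (fun st a =>
      match k a with
      | Kind.call => a :: st
      | Kind.ret => st.tail
      | Kind.internal => st) []

/-- A visibly deterministic pushdown automaton. -/
structure VDPA (α Q : Type) where
  kind : α → Kind
  δcall : Q → α → Q
  δint : Q → α → Q
  /-- return transition: state, input, popped top-of-stack symbol -/
  δret : Q → α → α → Q
  q0 : Q
  F : Set Q

/-- One step of the VDPA on a configuration; `none` means the run has failed
(a pop from the empty stack occurred). -/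
def VDPA.step {α Q : Type} (M : VDPA α Q) :
    Option (Q × List α) → α → Option (Q × List α)
  | none, _ => none
  | some (q, st), a =>
    match M.kind a with
    | Kind.call => some (M.δcall q a, a :: st)
    | Kind.internal => some (M.δint q a, st)
    | Kind.ret =>
      match st with
      | [] => none
      | c :: s => some (M.δret q a c, s)

def VDPA.run {α Q : Type} (M : VDPA α Q) (w : List α) : Option (Q × List α) :=
  w.foldl M.step (some (M.q0, []))

/-- `M` accepts `w` iff processing succeeds and ends in an accepting state with empty stack. -/
def VDPA.Accepts {α Q : Type} (M : VDPA α Q) (w : List α) : Prop :=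
  ∃ q ∈ M.F, M.run w = some (q, [])

def foldSt {α : Type} (k : α → Kind) (st : List α) (u : List α) : List α :=
  u.foldl
    (fun st a =>
      match k a with
      | Kind.call => a :: st
      | Kind.ret => st.tail
      | Kind.internal => st) st

lemma retCount_cons {α : Type} (k : α → Kind) (a : α) (p : List α) :
    retCount k (a :: p) = (if k a = Kind.ret then 1 else 0) + retCount k p := by
  by_cases h : k a = Kind.ret <;> simp [retCount, List.countP_cons, h] <;> omega

lemma callCount_cons {α : Type} (k : α → Kind) (a : α) (p : List α) :
    callCount k (a :: p) = (if k a = Kind.call then 1 else 0) + callCount k p := by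
  by_cases h : k a = Kind.call <;> simp [callCount, List.countP_cons, h] <;> omega

lemma cond_shift {α : Type} (k : α → Kind) (a : α) (u : List α) (n : ℕ)
    (h : ∀ p, p <+: a :: u → retCount k p ≤ callCount k p + n) :
    ∀ p, p <+: u →
      retCount k p + (if k a = Kind.ret then 1 else 0)
        ≤ callCount k p + ((if k a = Kind.call then 1 else 0) + n) := by
  intro p hp
  have := h (a :: p) (by obtain ⟨t, ht⟩ := hp; exact ⟨t, by rw [List.cons_append, ht]⟩)
  rw [retCount_cons, callCount_cons] at this
  omega

lemma tgo_append {α : Type} (k : α → Kind) (v : List α) :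
    ∀ (u st : List α),
      (∀ p, p <+: u → retCount k p ≤ callCount k p + st.length) →
      Tgo k st (u ++ v) = Tgo k st u ++ Tgo k (foldSt k st u) v := by
  intro u
  induction u with
  | nil => intro st _; simp [Tgo, foldSt]
  | cons a u ih =>
    intro st h
    have hshift := cond_shift k a u st.length h
    cases hk : k a with
    | call =>
      simp only [List.cons_append, Tgo, hk, foldSt, List.foldl_cons, List.append_eq, List.length_cons]
      rw [ih (a :: st) (by intro p hp; have := hshift p hp; simp [hk] at this ⊢; omega)]
      rfl
    | internal =>
      simp only [List.cons_append, Tgo, hk, foldSt, List.foldl_cons, List.append_eq, List.length_cons]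
      rw [ih st (by intro p hp; have := hshift p hp; simp [hk] at this ⊢; omega)]
      rfl
    | ret =>
      have h1 := h [a] ⟨u, rfl⟩
      rw [retCount_cons, callCount_cons] at h1
      simp [retCount, callCount, hk] at h1
      cases st with
      | nil => simp at h1
      | cons c s =>
        simp only [List.cons_append, Tgo, hk, foldSt, List.foldl_cons, List.append_eq, List.length_cons]
        rw [ih s (by intro p hp; have := hshift p hp; simp [hk] at this ⊢; omega)]
        rfl

lemma foldSt_len {α : Type} (k : α → Kind) :
    ∀ (u st : List α),
      (∀ p, p <+: u → retCount k p ≤ callCount k p + st.length) →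
      (foldSt k st u).length + retCount k u = st.length + callCount k u := by
  intro u
  induction u with
  | nil => intro st _; simp [foldSt, retCount, callCount]
  | cons a u ih =>
    intro st h
    have hshift := cond_shift k a u st.length h
    rw [retCount_cons, callCount_cons]
    cases hk : k a with
    | call =>
      have := ih (a :: st) (by intro p hp; have := hshift p hp; simp [hk] at this ⊢; omega)
      simp only [foldSt, List.foldl_cons, hk, List.length_cons] at this ⊢
      simp [hk]; omega
    | internal =>
      have := ih st (by intro p hp; have := hshift p hp; simp [hk] at this ⊢; omega)
      simp only [foldSt, List.foldl_cons, hk, List.length_cons] at this ⊢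
      simp [hk]; omega
    | ret =>
      have h1 := h [a] ⟨u, rfl⟩
      rw [retCount_cons, callCount_cons] at h1
      simp [retCount, callCount, hk] at h1
      cases st with
      | nil => simp at h1
      | cons c s =>
        have := ih s (by intro p hp; have := hshift p hp; simp [hk] at this ⊢; omega)
        simp only [foldSt, List.foldl_cons, hk] at this ⊢
        simp [hk]; omega

/-- The stack-aware transformation is multiplicative on well-matched words. -/
theorem transformation_append {α : Type} (k : α → Kind) (u v : List α)
    (hu : WellMatched k u) (hv : WellMatched k v) :
    T k (u ++ v) = T k u ++ T k v := by
  obtain ⟨hpre, hcnt⟩ := hu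
  have hc : ∀ p, p <+: u → retCount k p ≤ callCount k p + ([] : List α).length := by
    simpa using hpre
  have hlen := foldSt_len k u [] hc
  have hnil : foldSt k [] u = [] := by
    have : (foldSt k [] u).length = 0 := by simp at hlen; omega
    exact List.length_eq_zero_iff.mp this
  have := tgo_append k v u [] hc
  rw [hnil] at this
  simpa [T] using this
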